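/- Let K be a real symmetric r×r matrix such that for every λ ≥ 0, the matrix A₋ + λA₊ has all real eigenvalues positive, where A₊, A₋ are invertible real matrices with K = A₊⁻¹A₋ and A₋ + λA₊ has non-positive off-diagonal entries for λ ≥ 0, and suppose there exists v > 0 with A₊ᵀv > 0 and A₋ᵀv > 0, where all off-diagonal entries of A₊ and A₋ are non-positive. Then K is positive definite. -/

import Mathlib

open Matrix

theorem stmt8 (r : ℕ) (Ap Am : Matrix (Fin r) (Fin r) ℝ)
    (hp : IsUnit Ap.det) (hm : IsUnit Am.det)
    (hoffp : ∀ i j, i ≠ j → Ap i j ≤ 0) (hoffm : ∀ i j, i ≠ j → Am i j ≤ 0)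
    (heig : ∀ l : ℝ, 0 ≤ l → ∀ μ ∈ spectrum ℝ (Am + l • Ap), 0 < μ)
    (hv : ∃ v : Fin r → ℝ, (∀ i, 0 < v i) ∧
      (∀ i, 0 < Ap.transpose.mulVec v i) ∧ (∀ i, 0 < Am.transpose.mulVec v i))
    (K : Matrix (Fin r) (Fin r) ℝ) (hK : K = Ap⁻¹ * Am) (hsymm : K.transpose = K) :
    K.PosDef := by
  have hK' : K.IsHermitian := by
    rw [Matrix.IsHermitian, Matrix.conjTranspose]
    ext i j; simpa using congrFun (congrFun hsymm i) j
  -- spectrum of K is positive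
  have hspec : ∀ μ ∈ spectrum ℝ K, 0 < μ := by
    intro μ hμ
    by_contra h
    push_neg at h
    have hl : (0 : ℝ) ≤ -μ := by linarith
    have hunit : IsUnit (Am + (-μ) • Ap) := by
      by_contra hU
      have h0 : (0 : ℝ) ∈ spectrum ℝ (Am + (-μ) • Ap) := by
        rw [spectrum.mem_iff]
        simp only [map_zero, zero_sub, IsUnit.neg_iff]
        exact hU
      exact absurd (heig (-μ) hl 0 h0) (lt_irrefl 0)
    have hfact : K - μ • (1 : Matrix (Fin r) (Fin r) ℝ) = Ap⁻¹ * (Am + (-μ) • Ap) := by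
      rw [hK, Matrix.mul_add, Matrix.mul_smul, Matrix.nonsing_inv_mul _ hp]
      rw [neg_smul, ← sub_eq_add_neg]
    have hpi : IsUnit (Ap⁻¹) := (Matrix.isUnit_nonsing_inv_iff).2 (Matrix.isUnit_iff_isUnit_det _ |>.2 hp)
    have hKu : IsUnit (K - μ • (1 : Matrix (Fin r) (Fin r) ℝ)) := by
      rw [hfact]; exact hpi.mul hunit
    rw [spectrum.mem_iff] at hμ
    apply hμ
    have : algebraMap ℝ (Matrix (Fin r) (Fin r) ℝ) μ - K
        = -(K - μ • (1 : Matrix (Fin r) (Fin r) ℝ)) := by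
      rw [Algebra.algebraMap_eq_smul_one, neg_sub]
    rw [this]
    exact hKu.neg
  have hev : ∀ i, 0 < hK'.eigenvalues i := fun i =>
    hspec _ (hK'.eigenvalues_mem_spectrum_real i)
  have hpsd : K.PosSemidef :=
    hK'.posSemidef_iff_eigenvalues_nonneg.2 fun i => (hev i).le
  -- K invertible
  have hKdet : IsUnit K.det := by
    rw [hK, Matrix.det_mul, Matrix.det_nonsing_inv]
    exact (isUnit_ringInverse.mpr hp).mul hm
  rw [posDef_iff_dotProduct_mulVec]
  refine ⟨hK', fun x hx => ?_⟩
  have hle := (posSemidef_iff_dotProduct_mulVec.1 hpsd).2 x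
  rcases lt_or_eq_of_le hle with hlt | heq
  · exact hlt
  · exfalso
    have hz : K *ᵥ (x : Fin r → ℝ) = 0 :=
      (hpsd.dotProduct_mulVec_zero_iff x).1 (by simpa using heq.symm)
    have : (x : Fin r → ℝ) = 0 := by
      have hinj := Matrix.mulVec_injective_iff_isUnit.2 (Matrix.isUnit_iff_isUnit_det _ |>.2 hKdet)
      have := hinj (a₁ := x) (a₂ := 0) (by simpa using hz)
      simpa using this
    exact hx this
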